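/- Let k ≥ 2 be an integer, r ∈ {1, 2, 3}, and n an integer with n ≥ 7k + r. Then there exists a connected trivially perfect graph G on n vertices, admitting a partition of its vertex set into 3k + r sets of true twins, such that the nullity of the distance matrix of G is either k − 1 or k; moreover, if n = 7k + r then a graph can be chosen with nullity exactly k − 1, and if r = 1 and n = 7k + 2 then a graph can be chosen with nullity exactly k. -/

import Mathlib

open SimpleGraph

/-- The distance matrix of a finite simple graph, over ℚ: the `(u,v)` entry is the
graph distance between `u` and `v`. -/
noncomputable def distMatrix {V : Type*} [Fintype V] (G : SimpleGraph V) : Matrix V V ℚ :=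
  fun u v => (G.dist u v : ℚ)

/-- Two vertices are true twins if their closed neighborhoods coincide. -/
def TrueTwins {V : Type*} (G : SimpleGraph V) (u v : V) : Prop :=
  insert u (G.neighborSet u) = insert v (G.neighborSet v)

/-- A graph is trivially perfect if it has no induced subgraph isomorphic to the path P₄
or the cycle C₄. -/
def TriviallyPerfect {V : Type*} (G : SimpleGraph V) : Prop :=
  (¬ Nonempty (pathGraph 4 ↪g G)) ∧ (¬ Nonempty (cycleGraph 4 ↪g G))

/-- `G` admits a partition of its vertex set into `m` (nonempty) sets of pairwise
true twins. -/
def HasTrueTwinPartition {V : Type*} (G : SimpleGraph V) (m : ℕ) : Prop :=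
  ∃ P : Fin m → Finset V,
    (∀ v : V, ∃! i, v ∈ P i) ∧
    (∀ i, (P i).Nonempty) ∧
    (∀ i, ∀ u ∈ P i, ∀ v ∈ P i, TrueTwins G u v)

namespace TPAux

/-- Class type: one universal class, `m+2` copies of three gadget classes, `r'` extras. -/
abbrev Cl (m r' : ℕ) := Unit ⊕ (Fin (m+2) × Fin 3) ⊕ Fin r'

variable {m r' : ℕ}

def uCl : Cl m r' := Sum.inl ()
def cp (i : Fin (m+2)) (s : Fin 3) : Cl m r' := Sum.inr (Sum.inl (i, s))
def ex (a : Fin r') : Cl m r' := Sum.inr (Sum.inr a)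

/-- The class adjacency relation (reflexive). -/
def Rel : Cl m r' → Cl m r' → Prop
  | Sum.inl _, _ => True
  | _, Sum.inl _ => True
  | Sum.inr (Sum.inl (i,s)), Sum.inr (Sum.inl (j,t)) => i = j ∧ (s = 0 ∨ t = 0 ∨ s = t)
  | Sum.inr (Sum.inr a), Sum.inr (Sum.inr b) => a = b
  | Sum.inr (Sum.inl _), Sum.inr (Sum.inr _) => False
  | Sum.inr (Sum.inr _), Sum.inr (Sum.inl _) => False

@[simp] lemma rel_u_left (y : Cl m r') : Rel uCl y := by
  cases y with
  | inl _ => trivial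
  | inr y => cases y <;> trivial

@[simp] lemma rel_u_right (x : Cl m r') : Rel x uCl := by
  cases x with
  | inl _ => trivial
  | inr x => cases x with
    | inl p => exact (by cases p; trivial)
    | inr a => trivial

@[simp] lemma rel_cp_cp {i j : Fin (m+2)} {s t : Fin 3} :
    Rel (cp i s) (cp j t : Cl m r') ↔ i = j ∧ (s = 0 ∨ t = 0 ∨ s = t) := Iff.rfl

@[simp] lemma rel_ex_ex {a b : Fin r'} : Rel (ex a) (ex b : Cl m r') ↔ a = b := Iff.rfl

@[simp] lemma not_rel_cp_ex {i : Fin (m+2)} {s : Fin 3} {a : Fin r'} :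
    ¬ Rel (cp i s) (ex a : Cl m r') := fun h => h

@[simp] lemma not_rel_ex_cp {i : Fin (m+2)} {s : Fin 3} {a : Fin r'} :
    ¬ Rel (ex a) (cp i s : Cl m r') := fun h => h

lemma rel_refl (x : Cl m r') : Rel x x := by
  cases x with
  | inl _ => trivial
  | inr x => cases x with
    | inl p => exact ⟨rfl, Or.inr (Or.inr rfl)⟩
    | inr a => exact rfl

lemma rel_symm {x y : Cl m r'} (h : Rel x y) : Rel y x := by
  cases x with
  | inl _ => exact rel_u_right y
  | inr x => cases y with
    | inl _ => exact rel_u_left _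
    | inr y =>
      cases x with
      | inl p => cases y with
        | inl q =>
          obtain ⟨h1, h2⟩ := h
          exact ⟨h1.symm, by tauto⟩
        | inr b => exact (h : False).elim
      | inr a => cases y with
        | inl q => exact (h : False).elim
        | inr b => exact (h : a = b).symm


open scoped Classical

/-- Quotient distance value. -/
noncomputable def Mq (x y : Cl m r') : ℚ := if Rel x y then 1 else 2

lemma Mq_of_rel {x y : Cl m r'} (h : Rel x y) : Mq x y = 1 := by simp [Mq, h]
lemma Mq_of_not_rel {x y : Cl m r'} (h : ¬ Rel x y) : Mq x y = 2 := by simp [Mq, h]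

@[simp] lemma Mq_u_left (y : Cl m r') : Mq uCl y = 1 := Mq_of_rel (rel_u_left y)
@[simp] lemma Mq_u_right (x : Cl m r') : Mq x uCl = 1 := Mq_of_rel (rel_u_right x)
@[simp] lemma Mq_cp_ex {i : Fin (m+2)} {s : Fin 3} {a : Fin r'} :
    Mq (cp i s) (ex a) = 2 := Mq_of_not_rel not_rel_cp_ex
@[simp] lemma Mq_ex_cp {i : Fin (m+2)} {s : Fin 3} {a : Fin r'} :
    Mq (ex a) (cp i s) = 2 := Mq_of_not_rel not_rel_ex_cp
@[simp] lemma Mq_ex_ex {a b : Fin r'} :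
    Mq (ex a) (ex b : Cl m r') = if a = b then 1 else 2 := by
  by_cases h : a = b
  · rw [Mq_of_rel (rel_ex_ex.mpr h), if_pos h]
  · rw [Mq_of_not_rel (fun hh => h (rel_ex_ex.mp hh)), if_neg h]

lemma Mq_cp_cp {i j : Fin (m+2)} {s t : Fin 3} :
    Mq (cp i s) (cp j t : Cl m r') = if i = j ∧ (s = 0 ∨ t = 0 ∨ s = t) then 1 else 2 := by
  by_cases h : i = j ∧ (s = 0 ∨ t = 0 ∨ s = t)
  · rw [Mq_of_rel (rel_cp_cp.mpr h), if_pos h]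
  · rw [Mq_of_not_rel (fun hh => h (rel_cp_cp.mp hh)), if_neg h]

@[simp] lemma Mq_cp_cp_A_left {i j : Fin (m+2)} {t : Fin 3} :
    Mq (cp i 0) (cp j t : Cl m r') = if i = j then 1 else 2 := by
  rw [Mq_cp_cp]; by_cases h : i = j <;> simp [h]

@[simp] lemma Mq_cp_cp_A_right {i j : Fin (m+2)} {s : Fin 3} :
    Mq (cp i s) (cp j 0 : Cl m r') = if i = j then 1 else 2 := by
  rw [Mq_cp_cp]; by_cases h : i = j <;> simp [h]

@[simp] lemma Mq_cp_cp_same {i j : Fin (m+2)} {s : Fin 3} :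
    Mq (cp i s) (cp j s : Cl m r') = if i = j then 1 else 2 := by
  rw [Mq_cp_cp]; by_cases h : i = j <;> simp [h]

@[simp] lemma Mq_cp_cp_BD {i j : Fin (m+2)} :
    Mq (cp i 1) (cp j 2 : Cl m r') = 2 := by
  rw [Mq_cp_cp]; simp [Fin.ext_iff]

@[simp] lemma Mq_cp_cp_DB {i j : Fin (m+2)} :
    Mq (cp i 2) (cp j 1 : Cl m r') = 2 := by
  rw [Mq_cp_cp]; simp [Fin.ext_iff]

section Graph

variable {V : Type*} [Fintype V] (φ : V → Cl m r')

/-- The blow-up graph of `Rel` along the class map `φ`. -/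
def bg : SimpleGraph V where
  Adj u v := u ≠ v ∧ Rel (φ u) (φ v)
  symm := ⟨fun u v ⟨h1, h2⟩ => ⟨h1.symm, rel_symm h2⟩⟩
  loopless := ⟨fun u h => h.1 rfl⟩

lemma bg_adj {u v : V} : (bg φ).Adj u v ↔ u ≠ v ∧ Rel (φ u) (φ v) := Iff.rfl

variable {φ} (u0 : V) (hu0 : φ u0 = uCl)

include hu0 in
lemma bg_adj_u0 {v : V} (h : v ≠ u0) : (bg φ).Adj u0 v :=
  ⟨h.symm, by rw [hu0]; exact rel_u_left _⟩

include hu0 in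
lemma bg_connected : (bg φ).Connected := by
  rw [connected_iff]
  refine ⟨fun u v => ?_, ⟨u0⟩⟩
  have h1 : ∀ w : V, (bg φ).Reachable u0 w := by
    intro w
    by_cases hw : w = u0
    · rw [hw]
    · exact (bg_adj_u0 u0 hu0 hw).reachable
  exact (h1 u).symm.trans (h1 v)

include hu0 in
lemma bg_dist {u v : V} :
    (bg φ).dist u v = if u = v then 0 else if Rel (φ u) (φ v) then 1 else 2 := by
  by_cases huv : u = v
  · simp [huv]
  · by_cases hrel : Rel (φ u) (φ v)
    · simp only [huv, if_false, hrel, if_true]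
      exact dist_eq_one_iff_adj.mpr ⟨huv, hrel⟩
    · simp only [huv, if_false, hrel]
      have hu : u ≠ u0 := by
        intro h; subst h; exact hrel (by rw [hu0]; exact rel_u_left _)
      have hv : v ≠ u0 := by
        intro h; subst h; exact hrel (by rw [hu0]; exact rel_u_right _)
      have a1 : (bg φ).Adj u u0 := ((bg_adj_u0 u0 hu0 hu).symm)
      have a2 : (bg φ).Adj u0 v := bg_adj_u0 u0 hu0 hv
      have hle : (bg φ).dist u v ≤ 2 := by
        have := (bg φ).dist_le (Walk.cons a1 (Walk.cons a2 Walk.nil))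
        simpa using this
      have hne0 : (bg φ).dist u v ≠ 0 := by
        have := ((bg_connected u0 hu0).pos_dist_of_ne (G := bg φ) huv)
        omega
      have hne1 : (bg φ).dist u v ≠ 1 := by
        intro h
        exact hrel (dist_eq_one_iff_adj.mp h).2
      omega

include hu0 in
lemma bg_distMatrix (u v : V) :
    distMatrix (bg φ) u v = Mq (φ u) (φ v) - (if u = v then 1 else 0) := by
  rw [distMatrix, bg_dist u0 hu0]
  by_cases huv : u = v
  · subst huv
    simp [Mq_of_rel (rel_refl (φ u))]
  · by_cases hrel : Rel (φ u) (φ v)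
    · simp [huv, hrel, Mq_of_rel hrel]
    · simp [huv, hrel, Mq_of_not_rel hrel]

lemma bg_closedNbhd (u : V) :
    insert u ((bg φ).neighborSet u) = {w | Rel (φ u) (φ w)} := by
  ext w
  simp only [Set.mem_insert_iff, mem_neighborSet, bg_adj, Set.mem_setOf_eq]
  constructor
  · rintro (rfl | ⟨-, h⟩)
    · exact rel_refl _
    · exact h
  · intro h
    by_cases hw : w = u
    · exact Or.inl hw
    · exact Or.inr ⟨fun hh => hw hh.symm, h⟩

lemma bg_trueTwins {u v : V} (h : φ u = φ v) : TrueTwins (bg φ) u v := by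
  unfold TrueTwins
  rw [bg_closedNbhd, bg_closedNbhd, h]

/-- The pure combinatorial core: no `P₄` pattern in `Rel`. -/
lemma no_P4_rel {x0 x1 x2 x3 : Cl m r'}
    (h01 : Rel x0 x1) (h12 : Rel x1 x2) (h23 : Rel x2 x3)
    (n02 : ¬ Rel x0 x2) (n03 : ¬ Rel x0 x3) (n13 : ¬ Rel x1 x3) : False := by
  -- none of the classes is the universal class
  have hU : ∀ y : Cl m r', ∀ u : Unit, y = Sum.inl u → (∀ z : Cl m r', Rel y z) := by
    rintro y u rfl z; exact rel_u_left z
  obtain ⟨y0, hy0⟩ : ∃ y, x0 = Sum.inr y := by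
    cases x0 with
    | inl u => exact absurd (hU _ u rfl x2) n02
    | inr y => exact ⟨y, rfl⟩
  obtain ⟨y1, hy1⟩ : ∃ y, x1 = Sum.inr y := by
    cases x1 with
    | inl u => exact absurd (hU _ u rfl x3) n13
    | inr y => exact ⟨y, rfl⟩
  obtain ⟨y2, hy2⟩ : ∃ y, x2 = Sum.inr y := by
    cases x2 with
    | inl u => exact absurd (rel_symm (hU _ u rfl x0)) n02
    | inr y => exact ⟨y, rfl⟩
  obtain ⟨y3, hy3⟩ : ∃ y, x3 = Sum.inr y := by
    cases x3 with
    | inl u => exact absurd (rel_symm (hU _ u rfl x1)) n13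
    | inr y => exact ⟨y, rfl⟩
  subst hy0 hy1 hy2 hy3
  -- none is an extra class
  -- key: an extra class relates (среди inr's) only to itself
  have hex : ∀ a : Fin r', ∀ y, Rel (Sum.inr y) (Sum.inr (Sum.inr a) : Cl m r') → y = Sum.inr a := by
    rintro a (p | b) h
    · exact (h : False).elim
    · exact congrArg Sum.inr (h : b = a)
  have hex' : ∀ a : Fin r', ∀ y, Rel (Sum.inr (Sum.inr a) : Cl m r') (Sum.inr y) → y = Sum.inr a :=
    fun a y h => hex a y (rel_symm h)
  -- show all are copy classes
  obtain ⟨p1, hp1⟩ : ∃ p, y1 = Sum.inl p := by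
    cases y1 with
    | inl p => exact ⟨p, rfl⟩
    | inr a =>
      have e0 := hex' a y0 (rel_symm h01)
      have e2 := hex' a y2 h12
      rw [e0, e2] at n02
      exact absurd (rel_refl _) n02
  obtain ⟨p2, hp2⟩ : ∃ p, y2 = Sum.inl p := by
    cases y2 with
    | inl p => exact ⟨p, rfl⟩
    | inr a =>
      have e1 := hex a y1 h12
      have e3 := hex' a y3 h23
      rw [e1, e3] at n13
      exact absurd (rel_refl _) n13
  obtain ⟨p0, hp0⟩ : ∃ p, y0 = Sum.inl p := by
    cases y0 with
    | inl p => exact ⟨p, rfl⟩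
    | inr a =>
      have e1 := hex' a y1 h01
      rw [hp1] at e1; exact absurd e1 (by simp)
  obtain ⟨p3, hp3⟩ : ∃ p, y3 = Sum.inl p := by
    cases y3 with
    | inl p => exact ⟨p, rfl⟩
    | inr a =>
      have e2 := hex a y2 h23
      rw [hp2] at e2; exact absurd e2 (by simp)
  subst hp0 hp1 hp2 hp3
  obtain ⟨i0, s0⟩ := p0; obtain ⟨i1, s1⟩ := p1; obtain ⟨i2, s2⟩ := p2; obtain ⟨i3, s3⟩ := p3
  obtain ⟨e01, r01⟩ := (h01 : i0 = i1 ∧ _)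
  obtain ⟨e12, r12⟩ := (h12 : i1 = i2 ∧ _)
  obtain ⟨e23, r23⟩ := (h23 : i2 = i3 ∧ _)
  subst e01 e12 e23
  have n02' : ¬ (s0 = 0 ∨ s2 = 0 ∨ s0 = s2) := fun h => n02 ⟨rfl, h⟩
  have n03' : ¬ (s0 = 0 ∨ s3 = 0 ∨ s0 = s3) := fun h => n03 ⟨rfl, h⟩
  have n13' : ¬ (s1 = 0 ∨ s3 = 0 ∨ s1 = s3) := fun h => n13 ⟨rfl, h⟩
  clear n02 n03 n13
  revert r01 r12 r23 n02' n03' n13'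
  revert s0 s1 s2 s3
  clear i0
  decide

/-- The pure combinatorial core: no `C₄` pattern in `Rel`. -/
lemma no_C4_rel {x0 x1 x2 x3 : Cl m r'}
    (h01 : Rel x0 x1) (h12 : Rel x1 x2) (h23 : Rel x2 x3) (h03 : Rel x0 x3)
    (n02 : ¬ Rel x0 x2) (n13 : ¬ Rel x1 x3) : False := by
  have hU : ∀ y : Cl m r', ∀ u : Unit, y = Sum.inl u → (∀ z : Cl m r', Rel y z) := by
    rintro y u rfl z; exact rel_u_left z
  obtain ⟨y0, hy0⟩ : ∃ y, x0 = Sum.inr y := by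
    cases x0 with
    | inl u => exact absurd (hU _ u rfl x2) n02
    | inr y => exact ⟨y, rfl⟩
  obtain ⟨y1, hy1⟩ : ∃ y, x1 = Sum.inr y := by
    cases x1 with
    | inl u => exact absurd (hU _ u rfl x3) n13
    | inr y => exact ⟨y, rfl⟩
  obtain ⟨y2, hy2⟩ : ∃ y, x2 = Sum.inr y := by
    cases x2 with
    | inl u => exact absurd (rel_symm (hU _ u rfl x0)) n02
    | inr y => exact ⟨y, rfl⟩
  obtain ⟨y3, hy3⟩ : ∃ y, x3 = Sum.inr y := by
    cases x3 with
    | inl u => exact absurd (rel_symm (hU _ u rfl x1)) n13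
    | inr y => exact ⟨y, rfl⟩
  subst hy0 hy1 hy2 hy3
  have hex : ∀ a : Fin r', ∀ y, Rel (Sum.inr y) (Sum.inr (Sum.inr a) : Cl m r') → y = Sum.inr a := by
    rintro a (p | b) h
    · exact (h : False).elim
    · exact congrArg Sum.inr (h : b = a)
  have hex' : ∀ a : Fin r', ∀ y, Rel (Sum.inr (Sum.inr a) : Cl m r') (Sum.inr y) → y = Sum.inr a :=
    fun a y h => hex a y (rel_symm h)
  obtain ⟨p0, hp0⟩ : ∃ p, y0 = Sum.inl p := by
    cases y0 with
    | inl p => exact ⟨p, rfl⟩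
    | inr a =>
      have e1 := hex' a y1 h01
      have e3 := hex' a y3 h03
      rw [e1, e3] at n13
      exact absurd (rel_refl _) n13
  obtain ⟨p1, hp1⟩ : ∃ p, y1 = Sum.inl p := by
    cases y1 with
    | inl p => exact ⟨p, rfl⟩
    | inr a =>
      have e0 := hex' a y0 (rel_symm h01)
      have e2 := hex' a y2 h12
      rw [e0, e2] at n02
      exact absurd (rel_refl _) n02
  obtain ⟨p2, hp2⟩ : ∃ p, y2 = Sum.inl p := by
    cases y2 with
    | inl p => exact ⟨p, rfl⟩
    | inr a =>
      have e1 := hex a y1 h12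
      rw [hp1] at e1; exact absurd e1 (by simp)
  obtain ⟨p3, hp3⟩ : ∃ p, y3 = Sum.inl p := by
    cases y3 with
    | inl p => exact ⟨p, rfl⟩
    | inr a =>
      have e0 := hex a y0 h03
      rw [hp0] at e0; exact absurd e0 (by simp)
  subst hp0 hp1 hp2 hp3
  obtain ⟨i0, s0⟩ := p0; obtain ⟨i1, s1⟩ := p1; obtain ⟨i2, s2⟩ := p2; obtain ⟨i3, s3⟩ := p3
  obtain ⟨e01, r01⟩ := (h01 : i0 = i1 ∧ _)
  obtain ⟨e12, r12⟩ := (h12 : i1 = i2 ∧ _)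
  obtain ⟨e23, r23⟩ := (h23 : i2 = i3 ∧ _)
  subst e01 e12 e23
  have n02' : ¬ (s0 = 0 ∨ s2 = 0 ∨ s0 = s2) := fun h => n02 ⟨rfl, h⟩
  have n13' : ¬ (s1 = 0 ∨ s3 = 0 ∨ s1 = s3) := fun h => n13 ⟨rfl, h⟩
  have r03 : s0 = 0 ∨ s3 = 0 ∨ s0 = s3 := (h03 : _ ∧ _).2
  clear h03 n02 n13
  revert r01 r12 r23 r03 n02' n13'
  revert s0 s1 s2 s3
  clear i0
  decide

lemma bg_triviallyPerfect : TriviallyPerfect (bg φ) := by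
  constructor
  · rintro ⟨f⟩
    have adj : ∀ a b : Fin 4, (pathGraph 4).Adj a b → Rel (φ (f a)) (φ (f b)) :=
      fun a b h => (f.map_adj_iff.mpr h).2
    have nadj : ∀ a b : Fin 4, a ≠ b → ¬ (pathGraph 4).Adj a b → ¬ Rel (φ (f a)) (φ (f b)) := by
      intro a b hab h hrel
      exact h (f.map_adj_iff.mp ⟨fun he => hab (f.injective he), hrel⟩)
    have h01 := adj 0 1 (by rw [pathGraph_adj]; decide)
    have h12 := adj 1 2 (by rw [pathGraph_adj]; decide)
    have h23 := adj 2 3 (by rw [pathGraph_adj]; decide)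
    have n02 := nadj 0 2 (by decide) (by rw [pathGraph_adj]; decide)
    have n03 := nadj 0 3 (by decide) (by rw [pathGraph_adj]; decide)
    have n13 := nadj 1 3 (by decide) (by rw [pathGraph_adj]; decide)
    exact no_P4_rel h01 h12 h23 n02 n03 n13
  · rintro ⟨f⟩
    have adj : ∀ a b : Fin 4, (cycleGraph 4).Adj a b → Rel (φ (f a)) (φ (f b)) :=
      fun a b h => (f.map_adj_iff.mpr h).2
    have nadj : ∀ a b : Fin 4, a ≠ b → ¬ (cycleGraph 4).Adj a b → ¬ Rel (φ (f a)) (φ (f b)) := by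
      intro a b hab h hrel
      exact h (f.map_adj_iff.mp ⟨fun he => hab (f.injective he), hrel⟩)
    have h01 := adj 0 1 (by rw [cycleGraph_adj']; decide)
    have h12 := adj 1 2 (by rw [cycleGraph_adj']; decide)
    have h23 := adj 2 3 (by rw [cycleGraph_adj']; decide)
    have h03 := adj 0 3 (by rw [cycleGraph_adj']; decide)
    have n02 := nadj 0 2 (by decide) (by rw [cycleGraph_adj']; decide)
    have n13 := nadj 1 3 (by decide) (by rw [cycleGraph_adj']; decide)
    exact no_C4_rel h01 h12 h23 h03 n02 n13

end Graph

section Quot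

lemma sum_if_helper {ι : Type*} [Fintype ι] [DecidableEq ι] (g : ι → ℚ) (i : ι) :
    ∑ j, (if i = j then (1:ℚ) else 2) * g j = 2 * ∑ j, g j - g i := by
  have h : ∀ j, (if i = j then (1:ℚ) else 2) * g j
      = 2 * g j - (if i = j then g j else 0) := by
    intro j; by_cases h : i = j <;> simp [h] <;> ring
  rw [Finset.sum_congr rfl (fun j _ => h j), Finset.sum_sub_distrib, ← Finset.mul_sum,
    Finset.sum_ite_eq]
  simp

variable {m r' : ℕ}

/-- The quotient linear operator value at class `z`. -/
noncomputable def Sq (c : ℕ) (w : Cl m r' → ℚ) (z : Cl m r') : ℚ :=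
  (c:ℚ) * (Mq z uCl * w uCl) +
    (∑ i : Fin (m+2), (3 * (Mq z (cp i 0) * w (cp i 0)) + 2 * (Mq z (cp i 1) * w (cp i 1))
      + 2 * (Mq z (cp i 2) * w (cp i 2)))) +
    ∑ a : Fin r', Mq z (ex a) * w (ex a)

/-- Canonical description of quotient-kernel solutions. -/
def Sol (c : ℕ) (w : Cl m r' → ℚ) : Prop :=
  (∀ a, w (ex a) = 0) ∧ (∀ i, w (cp i 1) = - w (cp i 0)) ∧ (∀ i, w (cp i 2) = - w (cp i 0)) ∧
  ((c:ℚ) - 2) * w uCl = 0 ∧ (∑ i, w (cp i 0)) = ((c:ℚ) - 1) * w uCl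

variable {c : ℕ} {w : Cl m r' → ℚ}

lemma Sq_u : Sq c w uCl = (c:ℚ) * w uCl +
    (3 * ∑ i, w (cp i 0) + 2 * ∑ i, w (cp i 1) + 2 * ∑ i, w (cp i 2)) + ∑ a, w (ex a) := by
  simp only [Sq, Mq_u_left, one_mul, Finset.sum_add_distrib, ← Finset.mul_sum]

lemma Sq_ex (a : Fin r') : Sq c w (ex a) = (c:ℚ) * w uCl +
    (6 * ∑ i, w (cp i 0) + 4 * ∑ i, w (cp i 1) + 4 * ∑ i, w (cp i 2))
    + (2 * ∑ b, w (ex b) - w (ex a)) := by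
  simp only [Sq, Mq_u_right, one_mul, Mq_ex_cp, Mq_ex_ex, Finset.sum_add_distrib,
    ← Finset.mul_sum]
  rw [sum_if_helper (fun b => w (ex b)) a]
  ring

lemma Sq_cpA (i : Fin (m+2)) : Sq c w (cp i 0) = (c:ℚ) * w uCl +
    (6 * ∑ j, w (cp j 0) + 4 * ∑ j, w (cp j 1) + 4 * ∑ j, w (cp j 2))
    + 2 * ∑ a, w (ex a)
    - (3 * w (cp i 0) + 2 * w (cp i 1) + 2 * w (cp i 2)) := by
  simp only [Sq, Mq_u_right, one_mul, Mq_cp_ex, Mq_cp_cp_A_left, Finset.sum_add_distrib,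
    ← Finset.mul_sum, mul_ite, mul_one]
  rw [sum_if_helper (fun j => w (cp j 0)) i, sum_if_helper (fun j => w (cp j 1)) i,
    sum_if_helper (fun j => w (cp j 2)) i]
  ring

lemma Sq_cpB (i : Fin (m+2)) : Sq c w (cp i 1) = (c:ℚ) * w uCl +
    (6 * ∑ j, w (cp j 0) + 4 * ∑ j, w (cp j 1) + 4 * ∑ j, w (cp j 2))
    + 2 * ∑ a, w (ex a)
    - (3 * w (cp i 0) + 2 * w (cp i 1)) := by
  simp only [Sq, Mq_u_right, one_mul, Mq_cp_ex, Mq_cp_cp_A_right, Mq_cp_cp_same, Mq_cp_cp_BD,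
    Finset.sum_add_distrib, ← Finset.mul_sum, mul_ite, mul_one]
  rw [sum_if_helper (fun j => w (cp j 0)) i, sum_if_helper (fun j => w (cp j 1)) i]
  ring

lemma Sq_cpD (i : Fin (m+2)) : Sq c w (cp i 2) = (c:ℚ) * w uCl +
    (6 * ∑ j, w (cp j 0) + 4 * ∑ j, w (cp j 1) + 4 * ∑ j, w (cp j 2))
    + 2 * ∑ a, w (ex a)
    - (3 * w (cp i 0) + 2 * w (cp i 2)) := by
  simp only [Sq, Mq_u_right, one_mul, Mq_cp_ex, Mq_cp_cp_A_right, Mq_cp_cp_same, Mq_cp_cp_DB,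
    Finset.sum_add_distrib, ← Finset.mul_sum, mul_ite, mul_one]
  rw [sum_if_helper (fun j => w (cp j 0)) i, sum_if_helper (fun j => w (cp j 2)) i]
  ring

lemma quot_iff : (∀ z, Sq c w z = w z) ↔ Sol c w := by
  constructor
  · intro h
    have hA : ∀ i, Sq c w (cp i 0) = w (cp i 0) := fun i => h (cp i 0)
    have hB : ∀ i, Sq c w (cp i 1) = w (cp i 1) := fun i => h (cp i 1)
    have hD : ∀ i, Sq c w (cp i 2) = w (cp i 2) := fun i => h (cp i 2)
    have hU : Sq c w uCl = w uCl := h uCl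
    simp only [Sq_cpA, Sq_cpB, Sq_cpD, Sq_u] at hA hB hD hU
    -- step 1 : in each copy, B-value equals D-value
    have s1 : ∀ i, w (cp i 1) = w (cp i 2) := by
      intro i; linarith [hB i, hD i]
    -- step 2 : B = -A, D = -A
    have s2 : ∀ i, w (cp i 1) = - w (cp i 0) := by
      intro i; linarith [hA i, hB i, s1 i]
    have s3 : ∀ i, w (cp i 2) = - w (cp i 0) := by
      intro i; linarith [s1 i, s2 i]
    -- sum consequences
    have sB : ∑ i, w (cp i 1) = - ∑ i, w (cp i 0) := by
      rw [← Finset.sum_neg_distrib]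
      exact Finset.sum_congr rfl (fun i _ => s2 i)
    have sD : ∑ i, w (cp i 2) = - ∑ i, w (cp i 0) := by
      rw [← Finset.sum_neg_distrib]
      exact Finset.sum_congr rfl (fun i _ => s3 i)
    -- step 3 : the global quantity vanishes
    have s4 : (c:ℚ) * w uCl - 2 * ∑ j, w (cp j 0) + 2 * ∑ a, w (ex a) = 0 := by
      have := hA 0
      rw [sB, sD, s2 0, s3 0] at this
      linarith
    -- extras vanish
    have sE : ∀ a, w (ex a) = 0 := by
      intro a
      have hEa : Sq c w (ex a) = w (ex a) := h (ex a)
      rw [Sq_ex, sB, sD] at hEa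
      linarith
    have sTE : ∑ a : Fin r', w (ex a) = 0 :=
      Finset.sum_eq_zero (fun a _ => sE a)
    rw [sTE] at s4
    have s5 : ∑ i, w (cp i 0) = ((c:ℚ) - 1) * w uCl := by
      rw [sB, sD, sTE] at hU
      linear_combination -hU
    refine ⟨sE, s2, s3, ?_, s5⟩
    rw [s5] at s4
    linear_combination - s4
  · rintro ⟨sE, s2, s3, s4, s5⟩
    have sB : ∑ i, w (cp i 1) = - ∑ i, w (cp i 0) := by
      rw [← Finset.sum_neg_distrib]
      exact Finset.sum_congr rfl (fun i _ => s2 i)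
    have sD : ∑ i, w (cp i 2) = - ∑ i, w (cp i 0) := by
      rw [← Finset.sum_neg_distrib]
      exact Finset.sum_congr rfl (fun i _ => s3 i)
    have sTE : ∑ a : Fin r', w (ex a) = 0 :=
      Finset.sum_eq_zero (fun a _ => sE a)
    intro z
    match z with
    | Sum.inl u =>
      have : (Sum.inl u : Cl m r') = uCl := rfl
      rw [this, Sq_u, sB, sD, sTE, s5]
      ring
    | Sum.inr (Sum.inl (i, t)) =>
      have h3 : t = 0 ∨ t = 1 ∨ t = 2 := by omega
      rcases h3 with rfl | rfl | rfl
      · show Sq c w (cp i 0) = w (cp i 0)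
        rw [Sq_cpA, sB, sD, sTE, s5, s2 i, s3 i]
        linear_combination -s4
      · show Sq c w (cp i 1) = w (cp i 1)
        rw [Sq_cpB, sB, sD, sTE, s5, s2 i]
        linear_combination -s4
      · show Sq c w (cp i 2) = w (cp i 2)
        rw [Sq_cpD, sB, sD, sTE, s5, s3 i]
        linear_combination -s4
    | Sum.inr (Sum.inr a) =>
      show Sq c w (ex a) = w (ex a)
      rw [Sq_ex, sB, sD, sTE, s5, sE a]
      linear_combination -s4

end Quot

section Rank

variable {m r' : ℕ} {V : Type*} [Fintype V] {φ : V → Cl m r'} {c : ℕ}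

/-- kernel membership in terms of the quotient matrix. -/
lemma mem_ker_iff (u0 : V) (hu0 : φ u0 = uCl) (x : V → ℚ) :
    x ∈ LinearMap.ker (distMatrix (bg φ)).mulVecLin ↔
      ∀ u, ∑ v, Mq (φ u) (φ v) * x v = x u := by
  rw [LinearMap.mem_ker, funext_iff]
  refine forall_congr' (fun u => ?_)
  rw [Matrix.mulVecLin_apply, Pi.zero_apply]
  have h1 : (distMatrix (bg φ)).mulVec x u
      = ∑ v, (Mq (φ u) (φ v) - if u = v then 1 else 0) * x v := by
    rw [Matrix.mulVec, dotProduct]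
    exact Finset.sum_congr rfl fun v _ => by rw [bg_distMatrix u0 hu0]
  have h2 : ∑ v, (Mq (φ u) (φ v) - if u = v then 1 else 0) * x v
      = (∑ v, Mq (φ u) (φ v) * x v) - x u := by
    rw [Finset.sum_congr rfl (fun v _ => sub_mul (Mq (φ u) (φ v)) _ (x v)),
      Finset.sum_sub_distrib]
    congr 1
    simp [ite_mul, Finset.sum_ite_eq]
  rw [h1, h2, sub_eq_zero]

variable (hsum : ∀ F : Cl m r' → ℚ, ∑ v, F (φ v) =
    (c:ℚ) * F uCl + (∑ i : Fin (m+2), (3 * F (cp i 0) + 2 * F (cp i 1) + 2 * F (cp i 2)))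
      + ∑ a : Fin r', F (ex a))

include hsum in
lemma ker_iff_sol (u0 : V) (hu0 : φ u0 = uCl) (x : V → ℚ) :
    x ∈ LinearMap.ker (distMatrix (bg φ)).mulVecLin ↔
      ∃ w : Cl m r' → ℚ, Sol c w ∧ x = fun v => w (φ v) := by
  rw [mem_ker_iff u0 hu0]
  constructor
  · intro h
    set w : Cl m r' → ℚ := fun z => ∑ v, Mq z (φ v) * x v with hw
    have hx : ∀ u, x u = w (φ u) := fun u => (h u).symm
    have hq : ∀ z, Sq c w z = w z := by
      intro z
      have e1 : w z = ∑ v, Mq z (φ v) * w (φ v) :=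
        Finset.sum_congr rfl fun v _ => congrArg (fun t => Mq z (φ v) * t) (hx v)
      have e2 : ∑ v, Mq z (φ v) * w (φ v) = Sq c w z :=
        hsum (fun y => Mq z y * w y)
      rw [← e1] at e2
      exact e2.symm
    refine ⟨w, quot_iff.mp hq, funext hx⟩
  · rintro ⟨w, hsol, rfl⟩
    intro u
    have e2 : ∑ v, Mq (φ u) (φ v) * w (φ v) = Sq c w (φ u) :=
      hsum (fun y => Mq (φ u) y * w y)
    rw [e2]
    exact quot_iff.mpr hsol (φ u)

lemma ite_s0 {x y : ℚ} : (if (0 : Fin 3) = 0 then x else y) = x := if_pos rfl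
lemma ite_s1 {x y : ℚ} : (if (1 : Fin 3) = 0 then x else y) = y := if_neg (by decide)
lemma ite_s2 {x y : ℚ} : (if (2 : Fin 3) = 0 then x else y) = y := if_neg (by decide)

/-- Kernel vectors, case `c ≠ 2`. -/
def wA (i : Fin (m+1)) : Cl m r' → ℚ :=
  fun z => match z with
  | Sum.inr (Sum.inl (j, s)) =>
      ((if j = 0 then 1 else 0) - (if j = i.succ then 1 else 0)) * (if s = 0 then 1 else -1)
  | _ => 0

@[simp] lemma wA_u (i : Fin (m+1)) : wA i (uCl : Cl m r') = 0 := rfl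
@[simp] lemma wA_ex (i : Fin (m+1)) (a : Fin r') : wA i (ex a : Cl m r') = 0 := rfl
@[simp] lemma wA_cp (i : Fin (m+1)) (j : Fin (m+2)) (s : Fin 3) :
    wA i (cp j s : Cl m r') =
      ((if j = 0 then 1 else 0) - (if j = i.succ then 1 else 0)) * (if s = 0 then 1 else -1) :=
  rfl

lemma sol_wA (i : Fin (m+1)) : Sol (m := m) (r' := r') c (wA i) := by
  refine ⟨fun a => rfl, fun j => ?_, fun j => ?_, by simp, ?_⟩
  · rw [wA_cp, wA_cp, ite_s1, ite_s0]; ring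
  · rw [wA_cp, wA_cp, ite_s2, ite_s0]; ring
  · have : ∀ j : Fin (m+2), wA i (cp j 0 : Cl m r') =
        (if j = 0 then 1 else 0) - (if j = i.succ then 1 else 0) := by
      intro j; rw [wA_cp, ite_s0, mul_one]
    rw [Finset.sum_congr rfl (fun j _ => this j), Finset.sum_sub_distrib]
    simp [Finset.sum_ite_eq']

/-- Kernel vectors, case `c = 2`. -/
def wB (i : Fin (m+2)) : Cl m r' → ℚ :=
  fun z => match z with
  | Sum.inl _ => 1
  | Sum.inr (Sum.inl (j, s)) => (if j = i then 1 else 0) * (if s = 0 then 1 else -1)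
  | Sum.inr (Sum.inr _) => 0

@[simp] lemma wB_u (i : Fin (m+2)) : wB i (uCl : Cl m r') = 1 := rfl
@[simp] lemma wB_ex (i : Fin (m+2)) (a : Fin r') : wB i (ex a : Cl m r') = 0 := rfl
@[simp] lemma wB_cp (i : Fin (m+2)) (j : Fin (m+2)) (s : Fin 3) :
    wB i (cp j s : Cl m r') = (if j = i then 1 else 0) * (if s = 0 then 1 else -1) := rfl

lemma sol_wB (i : Fin (m+2)) (hc : c = 2) : Sol (m := m) (r' := r') c (wB i) := by
  subst hc
  refine ⟨fun a => rfl, fun j => ?_, fun j => ?_, by norm_num, ?_⟩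
  · rw [wB_cp, wB_cp, ite_s1, ite_s0]; ring
  · rw [wB_cp, wB_cp, ite_s2, ite_s0]; ring
  · have : ∀ j : Fin (m+2), wB i (cp j 0 : Cl m r') = (if j = i then 1 else 0) := by
      intro j; rw [wB_cp, ite_s0, mul_one]
    rw [Finset.sum_congr rfl (fun j _ => this j)]
    simp [Finset.sum_ite_eq']
    norm_num

/-- Solutions are spanned by the `wA`, case `c ≠ 2`. -/
lemma sol_span_wA (hc : c ≠ 2) {w : Cl m r' → ℚ} (hsol : Sol c w) :
    ∀ z, w z = ∑ i : Fin (m+1), (-(w (cp i.succ 0))) * wA i z := by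
  obtain ⟨sE, s2, s3, s4, s5⟩ := hsol
  have hcq : (c:ℚ) - 2 ≠ 0 := by
    intro h
    apply hc
    have : (c:ℚ) = 2 := by linarith
    exact_mod_cast this
  have hU : w uCl = 0 := by
    rcases mul_eq_zero.mp s4 with h | h
    · exact absurd h hcq
    · exact h
  have hTA : ∑ j, w (cp j 0) = 0 := by rw [s5, hU, mul_zero]
  have hsucc : ∑ i : Fin (m+1), w (cp i.succ 0) = - w (cp 0 0) := by
    have := Fin.sum_univ_succ (fun j : Fin (m+2) => w (cp j 0))
    rw [hTA] at this
    linarith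
  intro z
  match z with
  | Sum.inl u =>
    show w uCl = _
    rw [hU]
    symm
    apply Finset.sum_eq_zero
    intro i _
    rw [show (Sum.inl u : Cl m r') = uCl from rfl, wA_u, mul_zero]
  | Sum.inr (Sum.inr a) =>
    show w (ex a) = _
    rw [sE a]
    symm
    apply Finset.sum_eq_zero
    intro i _
    rw [show (Sum.inr (Sum.inr a) : Cl m r') = ex a from rfl, wA_ex, mul_zero]
  | Sum.inr (Sum.inl (j, s)) =>
    show w (cp j s) = ∑ i : Fin (m+1), (-(w (cp i.succ 0))) * wA i (cp j s)
    have key : ∑ i : Fin (m+1), (-(w (cp i.succ 0))) * wA i (cp j s : Cl m r')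
        = ((if j = 0 then 1 else 0) * w (cp 0 0)
          + (∑ i : Fin (m+1), (if j = i.succ then 1 else 0) * w (cp i.succ 0)))
          * (if s = 0 then 1 else -1) := by
      have e : ∀ i : Fin (m+1), -w (cp i.succ 0) * wA i (cp j s : Cl m r')
          = ((if j = i.succ then 1 else 0) * w (cp i.succ 0)) * (if s = 0 then 1 else -1)
            - ((if j = 0 then 1 else 0) * w (cp i.succ 0)) * (if s = 0 then 1 else -1) := by
        intro i; rw [wA_cp]; ring
      rw [Finset.sum_congr rfl (fun i _ => e i), Finset.sum_sub_distrib]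
      rw [show ∑ i : Fin (m+1), ((if j = 0 then (1:ℚ) else 0) * w (cp i.succ 0))
            * (if s = 0 then 1 else -1)
          = ((if j = 0 then (1:ℚ) else 0) * ∑ i : Fin (m+1), w (cp i.succ 0))
            * (if s = 0 then 1 else -1) from by rw [← Finset.sum_mul, ← Finset.mul_sum]]
      rw [hsucc, ← Finset.sum_mul]
      ring
    rw [key]
    have hjs : ∑ i : Fin (m+1), (if j = i.succ then (1:ℚ) else 0) * w (cp i.succ 0)
        = if j = 0 then 0 else w (cp j 0) := by
      induction j using Fin.cases with
      | zero =>
        rw [if_pos rfl]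
        apply Finset.sum_eq_zero
        intro i _
        rw [if_neg (Fin.succ_ne_zero i).symm, zero_mul]
      | succ j' =>
        rw [if_neg (Fin.succ_ne_zero j')]
        have : ∀ i : Fin (m+1), (if j'.succ = i.succ then (1:ℚ) else 0) * w (cp i.succ 0)
            = if i = j' then w (cp i.succ 0) else 0 := by
          intro i
          by_cases h : i = j'
          · subst h; simp
          · rw [if_neg, if_neg h, zero_mul]
            intro hh
            exact h ((Fin.succ_injective _ hh).symm)
        rw [Finset.sum_congr rfl (fun i _ => this i)]
        rw [Finset.sum_ite_eq']
        simp
    rw [hjs]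
    by_cases hj : j = 0
    · subst hj
      rw [if_pos rfl, if_pos rfl]
      rcases (by omega : s = 0 ∨ s = 1 ∨ s = 2) with rfl | rfl | rfl
      · rw [ite_s0]; ring
      · rw [ite_s1, s2 0]; ring
      · rw [ite_s2, s3 0]; ring
    · rw [if_neg hj, if_neg hj]
      rcases (by omega : s = 0 ∨ s = 1 ∨ s = 2) with rfl | rfl | rfl
      · rw [ite_s0]; ring
      · rw [ite_s1, s2 j]; ring
      · rw [ite_s2, s3 j]; ring

/-- Solutions are spanned by the `wB`, case `c = 2`. -/
lemma sol_span_wB (hc : c = 2) {w : Cl m r' → ℚ} (hsol : Sol c w) :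
    ∀ z, w z = ∑ i : Fin (m+2), (w (cp i 0)) * wB i z := by
  obtain ⟨sE, s2, s3, s4, s5⟩ := hsol
  subst hc
  have hTA : ∑ j, w (cp j 0) = w uCl := by rw [s5]; norm_num
  intro z
  match z with
  | Sum.inl u =>
    show w uCl = _
    rw [← hTA]
    apply Finset.sum_congr rfl
    intro i _
    rw [show (Sum.inl u : Cl m r') = uCl from rfl, wB_u, mul_one]
  | Sum.inr (Sum.inr a) =>
    show w (ex a) = _
    rw [sE a]
    symm
    apply Finset.sum_eq_zero
    intro i _
    rw [show (Sum.inr (Sum.inr a) : Cl m r') = ex a from rfl, wB_ex, mul_zero]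
  | Sum.inr (Sum.inl (j, s)) =>
    show w (cp j s) = ∑ i : Fin (m+2), (w (cp i 0)) * wB i (cp j s)
    have key : ∑ i : Fin (m+2), (w (cp i 0)) * wB i (cp j s : Cl m r')
        = w (cp j 0) * (if s = 0 then 1 else -1) := by
      have : ∀ i : Fin (m+2), (w (cp i 0)) * wB i (cp j s : Cl m r')
          = (if i = j then w (cp i 0) * (if s = 0 then 1 else -1) else 0) := by
        intro i
        rw [wB_cp]
        by_cases h : i = j
        · subst h; simp
        · rw [if_neg h, if_neg (fun hh => h hh.symm)]
          ring
      rw [Finset.sum_congr rfl (fun i _ => this i), Finset.sum_ite_eq']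
      simp
    rw [key]
    rcases (by omega : s = 0 ∨ s = 1 ∨ s = 2) with rfl | rfl | rfl
    · rw [ite_s0]; ring
    · rw [ite_s1, s2 j]; ring
    · rw [ite_s2, s3 j]; ring

include hsum in
/-- The kernel equals the span of the `wA`, for `c ≠ 2`. -/
lemma ker_eq_span_wA (hc : c ≠ 2) (u0 : V) (hu0 : φ u0 = uCl) :
    LinearMap.ker (distMatrix (bg φ)).mulVecLin
      = Submodule.span ℚ (Set.range (fun i : Fin (m+1) => fun v => wA i (φ v))) := by
  apply le_antisymm
  · intro x hx
    obtain ⟨w, hsol, rfl⟩ := (ker_iff_sol hsum u0 hu0 x).mp hx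
    have hz := sol_span_wA hc hsol
    have he : (fun v => w (φ v))
        = ∑ i : Fin (m+1), (-(w (cp i.succ 0))) • (fun v => wA i (φ v)) := by
      funext v
      rw [Finset.sum_apply]
      simp only [Pi.smul_apply, smul_eq_mul]
      exact hz (φ v)
    rw [he]
    exact Submodule.sum_mem _
      (fun i _ => Submodule.smul_mem _ _ (Submodule.subset_span ⟨i, rfl⟩))
  · rw [Submodule.span_le]
    rintro x ⟨i, rfl⟩
    rw [SetLike.mem_coe, ker_iff_sol hsum u0 hu0]
    exact ⟨wA i, sol_wA i, rfl⟩

include hsum in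
/-- The kernel equals the span of the `wB`, for `c = 2`. -/
lemma ker_eq_span_wB (hc : c = 2) (u0 : V) (hu0 : φ u0 = uCl) :
    LinearMap.ker (distMatrix (bg φ)).mulVecLin
      = Submodule.span ℚ (Set.range (fun i : Fin (m+2) => fun v => wB i (φ v))) := by
  apply le_antisymm
  · intro x hx
    obtain ⟨w, hsol, rfl⟩ := (ker_iff_sol hsum u0 hu0 x).mp hx
    have hz := sol_span_wB hc hsol
    have he : (fun v => w (φ v))
        = ∑ i : Fin (m+2), (w (cp i 0)) • (fun v => wB i (φ v)) := by
      funext v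
      rw [Finset.sum_apply]
      simp only [Pi.smul_apply, smul_eq_mul]
      exact hz (φ v)
    rw [he]
    exact Submodule.sum_mem _
      (fun i _ => Submodule.smul_mem _ _ (Submodule.subset_span ⟨i, rfl⟩))
  · rw [Submodule.span_le]
    rintro x ⟨i, rfl⟩
    rw [SetLike.mem_coe, ker_iff_sol hsum u0 hu0]
    exact ⟨wB i, sol_wB i hc, rfl⟩

lemma lin_indep_wA (rep : Cl m r' → V) (hrep : ∀ z, φ (rep z) = z) :
    LinearIndependent ℚ (fun i : Fin (m+1) => (fun v => wA i (φ v) : V → ℚ)) := by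
  rw [Fintype.linearIndependent_iff]
  intro g hg i
  have h1 := congrFun hg (rep (cp i.succ 0))
  rw [Finset.sum_apply] at h1
  simp only [Pi.smul_apply, smul_eq_mul, Pi.zero_apply, hrep] at h1
  have e : ∀ i' : Fin (m+1), g i' * wA i' (cp i.succ 0 : Cl m r')
      = if i' = i then -g i' else 0 := by
    intro i'
    rw [wA_cp, ite_s0, if_neg (Fin.succ_ne_zero i)]
    by_cases h : i' = i
    · subst h; rw [if_pos rfl, if_pos rfl]; ring
    · rw [if_neg (fun hh => h ((Fin.succ_injective _ hh).symm)), if_neg h]; ring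
  rw [Finset.sum_congr rfl (fun i' _ => e i'), Finset.sum_ite_eq'] at h1
  simp only [Finset.mem_univ, if_pos] at h1
  linarith

lemma lin_indep_wB (rep : Cl m r' → V) (hrep : ∀ z, φ (rep z) = z) :
    LinearIndependent ℚ (fun i : Fin (m+2) => (fun v => wB i (φ v) : V → ℚ)) := by
  rw [Fintype.linearIndependent_iff]
  intro g hg i
  have h1 := congrFun hg (rep (cp i 0))
  rw [Finset.sum_apply] at h1
  simp only [Pi.smul_apply, smul_eq_mul, Pi.zero_apply, hrep] at h1
  have e : ∀ i' : Fin (m+2), g i' * wB i' (cp i 0 : Cl m r')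
      = if i' = i then g i' else 0 := by
    intro i'
    rw [wB_cp, ite_s0]
    by_cases h : i' = i
    · subst h; rw [if_pos rfl, if_pos rfl]; ring
    · rw [if_neg (fun hh => h hh.symm), if_neg h]; ring
  rw [Finset.sum_congr rfl (fun i' _ => e i'), Finset.sum_ite_eq'] at h1
  simpa using h1

include hsum in
lemma finrank_ker (u0 : V) (hu0 : φ u0 = uCl) (rep : Cl m r' → V) (hrep : ∀ z, φ (rep z) = z) :
    Module.finrank ℚ (LinearMap.ker (distMatrix (bg φ)).mulVecLin)
      = if c = 2 then m + 2 else m + 1 := by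
  by_cases hc : c = 2
  · rw [if_pos hc, ker_eq_span_wB hsum hc u0 hu0,
      finrank_span_eq_card (lin_indep_wB rep hrep)]
    simp
  · rw [if_neg hc, ker_eq_span_wA hsum hc u0 hu0,
      finrank_span_eq_card (lin_indep_wA rep hrep)]
    simp

include hsum in
lemma nullity_eq (u0 : V) (hu0 : φ u0 = uCl) (rep : Cl m r' → V) (hrep : ∀ z, φ (rep z) = z) :
    Fintype.card V - (distMatrix (bg φ)).rank = (if c = 2 then m + 2 else m + 1) ∧
      (distMatrix (bg φ)).rank + (if c = 2 then m + 2 else m + 1) = Fintype.card V := by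
  have h := LinearMap.finrank_range_add_finrank_ker (distMatrix (bg φ)).mulVecLin
  rw [Module.finrank_pi ℚ, finrank_ker hsum u0 hu0 rep hrep] at h
  have hrank : (distMatrix (bg φ)).rank
      = Module.finrank ℚ (LinearMap.range (distMatrix (bg φ)).mulVecLin) := rfl
  omega

end Rank

section Inst

/-- The structured vertex type. -/
abbrev Vt (m r' c : ℕ) := Fin c ⊕ (Fin (m+2) × Fin 7) ⊕ Fin r'

def gd : Fin 7 → Fin 3 := ![0, 0, 0, 1, 1, 2, 2]

def rj : Fin 3 → Fin 7 := ![0, 3, 5]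

variable {m r' c : ℕ}

def classOf : Vt m r' c → Cl m r'
  | Sum.inl _ => uCl
  | Sum.inr (Sum.inl (i, j)) => cp i (gd j)
  | Sum.inr (Sum.inr a) => ex a

lemma card_Vt : Fintype.card (Vt m r' c) = c + (m+2)*7 + r' := by
  simp [Vt]
  omega

lemma gd_rj (s : Fin 3) : gd (rj s) = s := by fin_cases s <;> rfl

lemma sum_classOf (F : Cl m r' → ℚ) :
    ∑ t : Vt m r' c, F (classOf t)
      = (c:ℚ) * F uCl
        + (∑ i : Fin (m+2), (3 * F (cp i 0) + 2 * F (cp i 1) + 2 * F (cp i 2)))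
        + ∑ a : Fin r', F (ex a) := by
  rw [Fintype.sum_sum_type, Fintype.sum_sum_type, Fintype.sum_prod_type]
  have h1 : ∑ _x : Fin c, F (classOf (Sum.inl _x : Vt m r' c)) = (c:ℚ) * F uCl := by
    simp only [classOf]
    rw [Finset.sum_const, Finset.card_univ, Fintype.card_fin, nsmul_eq_mul]
  have h2 : ∀ i : Fin (m+2), ∑ j : Fin 7, F (classOf (Sum.inr (Sum.inl (i, j)) : Vt m r' c))
      = 3 * F (cp i 0) + 2 * F (cp i 1) + 2 * F (cp i 2) := by
    intro i
    simp only [classOf]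
    rw [Fin.sum_univ_seven]
    rw [show gd 0 = 0 from rfl, show gd 1 = 0 from rfl, show gd 2 = 0 from rfl,
      show gd 3 = 1 from rfl, show gd 4 = 1 from rfl, show gd 5 = 2 from rfl,
      show gd 6 = 2 from rfl]
    ring
  have h3 : ∀ a : Fin r', F (classOf (Sum.inr (Sum.inr a) : Vt m r' c)) = F (ex a) :=
    fun a => rfl
  rw [h1, Finset.sum_congr rfl (fun i _ => h2 i), Finset.sum_congr rfl (fun a _ => h3 a),
    add_assoc]

/-- Master construction lemma. -/
theorem master (m r' c n : ℕ) (hc : 1 ≤ c) (hn : n = c + (m+2)*7 + r') :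
    ∃ G : SimpleGraph (Fin n), G.Connected ∧ TriviallyPerfect G ∧
      HasTrueTwinPartition G (3*(m+2) + (r'+1)) ∧
      n - (distMatrix G).rank = (if c = 2 then m + 2 else m + 1) := by
  have hcard : Fintype.card (Vt m r' c) = n := by rw [card_Vt]; omega
  let e : Vt m r' c ≃ Fin n := Fintype.equivFinOfCardEq hcard
  let φ : Fin n → Cl m r' := fun v => classOf (e.symm v)
  have hφe : ∀ t : Vt m r' c, φ (e t) = classOf t := by
    intro t
    simp only [φ, Equiv.symm_apply_apply]
  -- representatives
  let repV : Cl m r' → Vt m r' c := fun z => match z with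
    | Sum.inl _ => Sum.inl ⟨0, hc⟩
    | Sum.inr (Sum.inl (i, s)) => Sum.inr (Sum.inl (i, rj s))
    | Sum.inr (Sum.inr a) => Sum.inr (Sum.inr a)
  let rep : Cl m r' → Fin n := fun z => e (repV z)
  have hrep : ∀ z, φ (rep z) = z := by
    intro z
    rw [show rep z = e (repV z) from rfl, hφe]
    match z with
    | Sum.inl u => rfl
    | Sum.inr (Sum.inl (i, s)) =>
      show cp i (gd (rj s)) = cp i s
      rw [gd_rj]
    | Sum.inr (Sum.inr a) => rfl
  let u0 : Fin n := rep uCl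
  have hu0 : φ u0 = uCl := hrep uCl
  have hsum : ∀ F : Cl m r' → ℚ, ∑ v, F (φ v) =
      (c:ℚ) * F uCl + (∑ i : Fin (m+2), (3 * F (cp i 0) + 2 * F (cp i 1) + 2 * F (cp i 2)))
        + ∑ a : Fin r', F (ex a) := by
    intro F
    rw [← Equiv.sum_comp e (fun v => F (φ v)), Finset.sum_congr rfl
      (fun t _ => by rw [hφe t]), sum_classOf]
  refine ⟨bg φ, bg_connected u0 hu0, bg_triviallyPerfect, ?_, ?_⟩
  · -- twin partition
    have hCl : Fintype.card (Cl m r') = 3*(m+2) + (r'+1) := by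
      simp [Cl]
      ring
    let ι : Cl m r' ≃ Fin (3*(m+2) + (r'+1)) := Fintype.equivFinOfCardEq hCl
    refine ⟨fun i => Finset.univ.filter (fun v => φ v = ι.symm i), ?_, ?_, ?_⟩
    · intro v
      refine ⟨ι (φ v), ?_, ?_⟩
      · simp [Finset.mem_filter]
      · intro j hj
        rw [Finset.mem_filter] at hj
        rw [hj.2]
        simp
    · intro i
      exact ⟨rep (ι.symm i), by simp [Finset.mem_filter, hrep]⟩
    · intro i u hu v hv
      rw [Finset.mem_filter] at hu hv
      exact bg_trueTwins (hu.2.trans hv.2.symm)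
  · have h := nullity_eq hsum u0 hu0 rep hrep
    rw [Fintype.card_fin] at h
    exact h.1

end Inst

end TPAux

theorem exists_triviallyPerfect_twinPartition_nullity
    (k r n : ℕ) (hk : 2 ≤ k) (hr : r ∈ ({1, 2, 3} : Set ℕ)) (hn : 7 * k + r ≤ n) :
    (∃ G : SimpleGraph (Fin n), G.Connected ∧ TriviallyPerfect G ∧
        HasTrueTwinPartition G (3 * k + r) ∧
        (n - (distMatrix G).rank = k - 1 ∨ n - (distMatrix G).rank = k)) ∧
    (n = 7 * k + r →
      ∃ G : SimpleGraph (Fin n), G.Connected ∧ TriviallyPerfect G ∧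
        HasTrueTwinPartition G (3 * k + r) ∧ n - (distMatrix G).rank = k - 1) ∧
    (r = 1 ∧ n = 7 * k + 2 →
      ∃ G : SimpleGraph (Fin n), G.Connected ∧ TriviallyPerfect G ∧
        HasTrueTwinPartition G (3 * k + r) ∧ n - (distMatrix G).rank = k) := by
  have hr1 : 1 ≤ r := by
    rcases hr with rfl | rfl | rfl <;> norm_num
  obtain ⟨m, rfl⟩ : ∃ m, k = m + 2 := ⟨k - 2, by omega⟩
  have hkr : 3 * (m + 2) + r = 3*(m+2) + ((r-1)+1) := by omega
  refine ⟨?_, ?_, ?_⟩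
  · obtain ⟨G, h1, h2, h3, h4⟩ := TPAux.master m (r-1) (n - 7*(m+2) - (r-1)) n
      (by omega) (by omega)
    refine ⟨G, h1, h2, by rwa [hkr], ?_⟩
    by_cases hc : n - 7*(m+2) - (r-1) = 2
    · rw [if_pos hc] at h4
      right
      omega
    · rw [if_neg hc] at h4
      left
      omega
  · intro hn'
    obtain ⟨G, h1, h2, h3, h4⟩ := TPAux.master m (r-1) 1 n (by omega) (by omega)
    refine ⟨G, h1, h2, by rwa [hkr], ?_⟩
    rw [if_neg (by norm_num)] at h4
    omega
  · rintro ⟨rfl, hn'⟩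
    obtain ⟨G, h1, h2, h3, h4⟩ := TPAux.master m 0 2 n (by omega) (by omega)
    refine ⟨G, h1, h2, by rwa [hkr], ?_⟩
    rw [if_pos rfl] at h4
    omega
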